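/- arXiv:1101.4114 — 4 statements merged into one kernel-verified Lean document; each statement's English description precedes it below -/
import Mathlib

section
/- Let I = ⟨f_1,...,f_r⟩ ⊂ C[Z_1,...,Z_n] and λ ∈ (0,∞)^n. If there exist a polynomial G in the real ideal I' ⊂ R[X_1,...,X_n,Y_1,...,Y_n] generated by {f_j^re, f_j^im : 1 ≤ j ≤ r} ∪ {X_k² + Y_k² - λ_k² : 1 ≤ k ≤ n} and a sum-of-squares polynomial H with G + H + 1 = 0, then λ is not contained in the unlog amoeba U_I = {(|z_1|,...,|z_n|) : z ∈ V(I)}. -/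
open MvPolynomial

/-- A real Nullstellensatz certificate `G + H + 1 = 0` with `G` in the realified ideal `I'`
and `H` a sum of squares certifies that `λ` is not in the unlog amoeba of `I`. -/
theorem stmt2 (n r : ℕ) (f : Fin r → MvPolynomial (Fin n) ℂ)
    (fre fim : Fin r → MvPolynomial (Fin n ⊕ Fin n) ℝ)
    (hdec : ∀ j (x y : Fin n → ℝ),
      eval (fun k => (x k : ℂ) + (y k : ℂ) * Complex.I) (f j) =
        (eval (Sum.elim x y) (fre j) : ℂ) + (eval (Sum.elim x y) (fim j) : ℂ) * Complex.I)
    (l : Fin n → ℝ) (hl : ∀ k, 0 < l k)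
    (G H : MvPolynomial (Fin n ⊕ Fin n) ℝ)
    (hG : G ∈ Ideal.span (Set.range fre ∪ Set.range fim ∪
      Set.range (fun k => X (Sum.inl k) ^ 2 + X (Sum.inr k) ^ 2 - C ((l k) ^ 2))))
    (hH : IsSumSq H)
    (hcert : G + H + 1 = 0) :
    ¬ ∃ z : Fin n → ℂ, (∀ j, eval z (f j) = 0) ∧ ∀ k, ‖z k‖ = l k := by
  rintro ⟨z, hz, habs⟩
  set x : Fin n → ℝ := fun k => (z k).re with hx
  set y : Fin n → ℝ := fun k => (z k).im with hy
  have hzeq : (fun k => (x k : ℂ) + (y k : ℂ) * Complex.I) = z := by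
    funext k; simp [hx, hy, Complex.re_add_im]
  set p : Fin n ⊕ Fin n → ℝ := Sum.elim x y with hp
  have hker : ∀ g ∈ (Set.range fre ∪ Set.range fim ∪
      Set.range (fun k => X (Sum.inl k) ^ 2 + X (Sum.inr k) ^ 2 -
        C ((l k) ^ 2) : Fin n → MvPolynomial (Fin n ⊕ Fin n) ℝ)),
      eval p g = 0 := by
    rintro g (hg | hg)
    · rcases hg with (⟨j, rfl⟩ | ⟨j, rfl⟩) <;>
      · have h0 : (eval p (fre j) : ℂ) + (eval p (fim j) : ℂ) * Complex.I = 0 := by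
          rw [← hdec j x y, hzeq]; exact hz j
        have hre := congrArg Complex.re h0
        have him := congrArg Complex.im h0
        simp at hre him
        first
        | exact hre
        | exact him
    · rcases hg with ⟨k, rfl⟩
      have : x k ^ 2 + y k ^ 2 = l k ^ 2 := by
        rw [← habs k, Complex.sq_norm, Complex.normSq_apply]; ring
      simp only [map_sub, map_add, map_pow, eval_X, eval_C, hp, Sum.elim_inl, Sum.elim_inr]
      rw [this]; ring
  have hGe : eval p G = 0 := by
    have : G ∈ RingHom.ker (eval p) := by
      refine Ideal.span_le.mpr ?_ hG
      intro g hg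
      exact hker g hg
    simpa [RingHom.mem_ker] using this
  have hHe : 0 ≤ eval p H := by
    clear hcert
    have : IsSumSq (eval p H) := by
      induction hH with
      | zero => simpa using IsSumSq.zero
      | sq_add a pS ih =>
        simpa [map_add, map_mul] using IsSumSq.sq_add (eval p a) ih
    exact this.nonneg
  have := congrArg (eval p) hcert
  simp [hGe] at this
  linarith
end

section
/- Let a, b > 0, c ∈ R, and λ_1, λ_2 > 0 with (a² + ab)λ_1² + (b² + ab)λ_2² < c². Then the polynomial identity (aX_1 + bX_2 - c)(aX_1 + bX_2 + c) + (aY_1 + bY_2)² - (a² + ab)(X_1² + Y_1² - λ_1²) - (b² + ab)(X_2² + Y_2² - λ_2²) + ab(X_1 - X_2)² + ab(Y_1 - Y_2)² = (a² + ab)λ_1² + (b² + ab)λ_2² - c² holds in R[X_1,X_2,Y_1,Y_2]; consequently (λ_1,λ_2) is not in the unlog amoeba of f = aZ_1 + bZ_2 + c. -/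
open MvPolynomial

/-- The explicit degree-2 certificate identity for linear amoebas, and the consequence
that `(λ_1, λ_2)` is not in the unlog amoeba of `f = aZ_1 + bZ_2 + c`.
Variables: `X 0 = X_1`, `X 1 = X_2`, `X 2 = Y_1`, `X 3 = Y_2`. -/
theorem stmt10 (a b c l1 l2 : ℝ) (ha : 0 < a) (hb : 0 < b)
    (hl1 : 0 < l1) (hl2 : 0 < l2)
    (hineq : (a ^ 2 + a * b) * l1 ^ 2 + (b ^ 2 + a * b) * l2 ^ 2 < c ^ 2) :
    ((C a * X 0 + C b * X 1 - C c) * (C a * X 0 + C b * X 1 + C c)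
        + (C a * X 2 + C b * X 3) ^ 2
        - C (a ^ 2 + a * b) * (X 0 ^ 2 + X 2 ^ 2 - C (l1 ^ 2))
        - C (b ^ 2 + a * b) * (X 1 ^ 2 + X 3 ^ 2 - C (l2 ^ 2))
        + C (a * b) * (X 0 - X 1) ^ 2 + C (a * b) * (X 2 - X 3) ^ 2
      = (C ((a ^ 2 + a * b) * l1 ^ 2 + (b ^ 2 + a * b) * l2 ^ 2 - c ^ 2) :
          MvPolynomial (Fin 4) ℝ)) ∧
    ¬ ∃ z1 z2 : ℂ, (a : ℂ) * z1 + (b : ℂ) * z2 + (c : ℂ) = 0 ∧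
        ‖z1‖ = l1 ∧ ‖z2‖ = l2 := by
  constructor
  · simp only [map_add, map_sub, map_mul, map_pow]
    ring
  · rintro ⟨z1, z2, heq, h1, h2⟩
    have hc : ‖(a : ℂ) * z1 + (b : ℂ) * z2‖ = |c| := by
      have : (a : ℂ) * z1 + (b : ℂ) * z2 = -(c : ℂ) := by linear_combination heq
      rw [this, norm_neg, Complex.norm_real, Real.norm_eq_abs]
    have hle : |c| ≤ a * l1 + b * l2 := by
      calc |c| = ‖(a : ℂ) * z1 + (b : ℂ) * z2‖ := hc.symm
        _ ≤ ‖(a : ℂ) * z1‖ + ‖(b : ℂ) * z2‖ :=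
            norm_add_le _ _
        _ = a * l1 + b * l2 := by
            rw [norm_mul, norm_mul, h1, h2, Complex.norm_real, Complex.norm_real, Real.norm_eq_abs, Real.norm_eq_abs,
              abs_of_pos ha, abs_of_pos hb]
    have habs : c ^ 2 ≤ (a * l1 + b * l2) ^ 2 := by
      have := abs_nonneg c
      nlinarith [sq_abs c]
    nlinarith [sq_nonneg (l1 - l2), mul_pos ha hb]
end

section
/- Let a, b > 0, c ∈ R, and λ_1, λ_2 > 0 satisfy (a² + ab)λ_1² + (b² + ab)λ_2² < c². Then there is no point (z_1, z_2) ∈ C² with az_1 + bz_2 + c = 0, |z_1| = λ_1 and |z_2| = λ_2. -/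
/-- If `(a² + ab)λ_1² + (b² + ab)λ_2² < c²`, then there is no zero of `aZ_1 + bZ_2 + c`
with `|z_1| = λ_1` and `|z_2| = λ_2`. -/
theorem stmt11 (a b c l1 l2 : ℝ) (ha : 0 < a) (hb : 0 < b)
    (hl1 : 0 < l1) (hl2 : 0 < l2)
    (hineq : (a ^ 2 + a * b) * l1 ^ 2 + (b ^ 2 + a * b) * l2 ^ 2 < c ^ 2) :
    ¬ ∃ z1 z2 : ℂ, (a : ℂ) * z1 + (b : ℂ) * z2 + (c : ℂ) = 0 ∧
        ‖z1‖ = l1 ∧ ‖z2‖ = l2 := by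
  rintro ⟨z1, z2, hz, h1, h2⟩
  have key : |c| ≤ a * l1 + b * l2 := by
    have : (c : ℂ) = -((a : ℂ) * z1 + (b : ℂ) * z2) := by linear_combination hz
    calc |c| = ‖(c : ℂ)‖ := ((Complex.norm_real c).trans (Real.norm_eq_abs c)).symm
    _ = ‖(a : ℂ) * z1 + (b : ℂ) * z2‖ := by rw [this, norm_neg]
    _ ≤ ‖(a : ℂ) * z1‖ + ‖(b : ℂ) * z2‖ := norm_add_le _ _
    _ = a * l1 + b * l2 := by
        rw [norm_mul, norm_mul, h1, h2, Complex.norm_real, Complex.norm_real, Real.norm_eq_abs, Real.norm_eq_abs,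
          abs_of_pos ha, abs_of_pos hb]
  have hc2 : c ^ 2 ≤ (a * l1 + b * l2) ^ 2 := by
    have := sq_abs c
    nlinarith [abs_nonneg c, mul_pos ha hl1, mul_pos hb hl2]
  nlinarith [sq_nonneg (l1 - l2), mul_pos ha hb]
end

section
/- For the polynomial f = aZ_1 + bZ_2 + c with a,b > 0, c ∈ R, a point (λ_1, λ_2) ∈ (0,∞)² lies in the unlog amoeba U_f if and only if the three triangle inequalities hold: aλ_1 ≤ bλ_2 + |c|, bλ_2 ≤ aλ_1 + |c|, and |c| ≤ aλ_1 + bλ_2. -/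
/-- Characterization of linear amoebas: `(λ_1, λ_2)` lies in the unlog amoeba of
`f = aZ_1 + bZ_2 + c` iff the three triangle inequalities hold. -/
theorem stmt12 (a b c l1 l2 : ℝ) (ha : 0 < a) (hb : 0 < b)
    (hl1 : 0 < l1) (hl2 : 0 < l2) :
    (∃ z1 z2 : ℂ, (a : ℂ) * z1 + (b : ℂ) * z2 + (c : ℂ) = 0 ∧
        ‖z1‖ = l1 ∧ ‖z2‖ = l2) ↔
      (a * l1 ≤ b * l2 + |c| ∧ b * l2 ≤ a * l1 + |c| ∧ |c| ≤ a * l1 + b * l2) := by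
  constructor
  · rintro ⟨z1, z2, heq, h1, h2⟩
    have e1 : (a : ℂ) * z1 = -((b : ℂ) * z2 + (c : ℂ)) := by linear_combination heq
    have e2 : (b : ℂ) * z2 = -((a : ℂ) * z1 + (c : ℂ)) := by linear_combination heq
    have e3 : (c : ℂ) = -((a : ℂ) * z1 + (b : ℂ) * z2) := by linear_combination heq
    have ha1 : ‖(a : ℂ) * z1‖ = a * l1 := by
      rw [norm_mul, Complex.norm_real, Real.norm_eq_abs, abs_of_pos ha, h1]
    have hb2 : ‖(b : ℂ) * z2‖ = b * l2 := by
      rw [norm_mul, Complex.norm_real, Real.norm_eq_abs, abs_of_pos hb, h2]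
    refine ⟨?_, ?_, ?_⟩
    · calc a * l1 = ‖(a : ℂ) * z1‖ := ha1.symm
        _ = ‖(b : ℂ) * z2 + (c : ℂ)‖ := by rw [e1, norm_neg]
        _ ≤ ‖(b : ℂ) * z2‖ + ‖(c : ℂ)‖ := norm_add_le _ _
        _ = b * l2 + |c| := by rw [hb2, Complex.norm_real, Real.norm_eq_abs]
    · calc b * l2 = ‖(b : ℂ) * z2‖ := hb2.symm
        _ = ‖(a : ℂ) * z1 + (c : ℂ)‖ := by rw [e2, norm_neg]
        _ ≤ ‖(a : ℂ) * z1‖ + ‖(c : ℂ)‖ := norm_add_le _ _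
        _ = a * l1 + |c| := by rw [ha1, Complex.norm_real, Real.norm_eq_abs]
    · calc |c| = ‖(c : ℂ)‖ := by rw [Complex.norm_real, Real.norm_eq_abs]
        _ = ‖(a : ℂ) * z1 + (b : ℂ) * z2‖ := by rw [e3, norm_neg]
        _ ≤ ‖(a : ℂ) * z1‖ + ‖(b : ℂ) * z2‖ := norm_add_le _ _
        _ = a * l1 + b * l2 := by rw [ha1, hb2]
  · rintro ⟨h1, h2, h3⟩
    set r1 := a * l1 with hr1
    set r2 := b * l2 with hr2
    have hr1pos : 0 < r1 := mul_pos ha hl1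
    have hr2pos : 0 < r2 := mul_pos hb hl2
    by_cases hc : c = 0
    · subst hc
      simp only [abs_zero, add_zero, zero_add] at h1 h2
      have hrr : r1 = r2 := le_antisymm h1 h2
      refine ⟨(l1 : ℝ), (-l2 : ℝ), ?_, ?_, ?_⟩
      · have hre : a * l1 = b * l2 := hrr
        have hce := congrArg (Complex.ofReal) hre
        push_cast at hce ⊢
        linear_combination hce
      · simp [abs_of_pos hl1]
      · simp [abs_of_pos hl2]
    · set x := (r2 ^ 2 - r1 ^ 2 - c ^ 2) / (2 * c) with hx
      have hc2 : (0:ℝ) < c ^ 2 := by positivity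
      have hxc : 2 * c * x = r2 ^ 2 - r1 ^ 2 - c ^ 2 := by
        rw [hx]; field_simp
      have hcabs : |c| ^ 2 = c ^ 2 := sq_abs c
      have key1 : r2 ^ 2 - r1 ^ 2 - c ^ 2 ≤ 2 * r1 * |c| := by nlinarith [abs_nonneg c]
      have key2 : r1 ^ 2 + c ^ 2 - r2 ^ 2 ≤ 2 * r1 * |c| := by nlinarith [abs_nonneg c]
      have hx2 : x ^ 2 ≤ r1 ^ 2 := by nlinarith [sq_nonneg (2 * c * x), hxc]
      set y := Real.sqrt (r1 ^ 2 - x ^ 2) with hy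
      have hy2 : y ^ 2 = r1 ^ 2 - x ^ 2 := Real.sq_sqrt (by linarith)
      set w : ℂ := (x : ℂ) + (y : ℂ) * Complex.I with hw
      have hwabs : ‖w‖ = r1 := by
        rw [hw, Complex.norm_def, Complex.normSq_add_mul_I]
        rw [show x ^ 2 + y ^ 2 = r1 ^ 2 by linarith]
        exact Real.sqrt_sq hr1pos.le
      have hwcabs : ‖(c : ℂ) + w‖ = r2 := by
        have : (c : ℂ) + w = ((c + x : ℝ) : ℂ) + (y : ℂ) * Complex.I := by
          rw [hw]; push_cast; ring
        rw [this, Complex.norm_def, Complex.normSq_add_mul_I]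
        rw [show (c + x) ^ 2 + y ^ 2 = r2 ^ 2 by nlinarith [hxc, hy2]]
        exact Real.sqrt_sq hr2pos.le
      refine ⟨w / (a : ℂ), (-(c : ℂ) - w) / (b : ℂ), ?_, ?_, ?_⟩
      · have hane : (a : ℂ) ≠ 0 := by exact_mod_cast ha.ne'
        have hbne : (b : ℂ) ≠ 0 := by exact_mod_cast hb.ne'
        field_simp
        ring
      · rw [norm_div, hwabs, Complex.norm_real, Real.norm_eq_abs, abs_of_pos ha]
        field_simp [hr1]
        exact hr1
      · have : -(c : ℂ) - w = -((c : ℂ) + w) := by ring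
        rw [norm_div, this, norm_neg, hwcabs, Complex.norm_real, Real.norm_eq_abs, abs_of_pos hb]
        field_simp [hr2]
        exact hr2
end
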